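/- If T is a tree with at least one edge, then pmd(T) equals the maximum degree Δ(T). -/

import Mathlib

open SimpleGraph

variable {V : Type*}

/-- A positive matching in a simple graph: a set `M` of pairwise disjoint edges of `G` together
with a vertex weighting `w` such that an edge `uv` of `G` satisfies `w u + w v > 0` iff the edge
belongs to `M`. -/
def IsPositiveMatching (G : SimpleGraph V) (M : Set (Sym2 V)) : Prop :=
  M ⊆ G.edgeSet ∧
  (∀ e ∈ M, ∀ f ∈ M, e ≠ f → ∀ v : V, v ∈ e → v ∉ f) ∧
  ∃ w : V → ℝ, ∀ u v : V, G.Adj u v → (0 < w u + w v ↔ s(u, v) ∈ M)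

/-- A positive matching decomposition of `G` with parts `E 0, …, E (p-1)`: an ordered partition
of the edge set of `G` such that each part is a positive matching of `G` minus the earlier
parts. -/
def IsPMD (G : SimpleGraph V) {p : ℕ} (E : Fin p → Set (Sym2 V)) : Prop :=
  (∀ i j : Fin p, i ≠ j → Disjoint (E i) (E j)) ∧
  (⋃ i, E i) = G.edgeSet ∧
  ∀ i : Fin p, IsPositiveMatching (G.deleteEdges (⋃ j : Fin p, ⋃ (_ : j < i), E j)) (E i)

/-- The minimum number of parts in a positive matching decomposition of `G`. -/
noncomputable def pmd (G : SimpleGraph V) : ℕ :=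
  sInf {p : ℕ | ∃ E : Fin p → Set (Sym2 V), IsPMD G E}

namespace PMDTreeAux

set_option linter.unusedSectionVars false

variable {V : Type*} [Fintype V] [DecidableEq V] (T : SimpleGraph V) [DecidableRel T.Adj]

/-- depth of `v` relative to root `r`. -/
noncomputable def dep (r v : V) : ℕ := T.dist v r

lemma dep_root (r : V) : dep T r r = 0 := SimpleGraph.dist_self

lemma dep_pos (hT : T.IsTree) (r : V) {v : V} (hv : v ≠ r) : 0 < dep T r v :=
  hT.isConnected.pos_dist_of_ne hv

lemma exists_parent (hT : T.IsTree) (r : V) {v : V} (hv : v ≠ r) :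
    ∃ u, T.Adj v u ∧ dep T r u + 1 = dep T r v := by
  obtain ⟨p, hp, hlen⟩ := hT.isConnected.exists_path_of_dist v r
  have hpos : 0 < T.dist v r := hT.isConnected.pos_dist_of_ne hv
  cases p with
  | nil => simp at hlen hpos
  | @cons _ u _ h q =>
    refine ⟨u, h, ?_⟩
    have h1 : T.dist u r ≤ q.length := SimpleGraph.dist_le q
    have h2 : T.dist v r ≤ T.dist v u + T.dist u r := hT.isConnected.dist_triangle
    have h3 : T.dist v u = 1 := SimpleGraph.dist_eq_one_iff_adj.mpr h
    have h4 : q.length + 1 = T.dist v r := by simpa using hlen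
    simp only [dep]; omega

noncomputable def parent (hT : T.IsTree) (r v : V) : V :=
  if h : v = r then r else (exists_parent T hT r h).choose

lemma parent_spec (hT : T.IsTree) (r : V) {v : V} (hv : v ≠ r) :
    T.Adj v (parent T hT r v) ∧ dep T r (parent T hT r v) + 1 = dep T r v := by
  rw [parent, dif_neg hv]; exact (exists_parent T hT r hv).choose_spec

lemma adj_dep (hT : T.IsTree) (r : V) {u v : V} (h : T.Adj u v) :
    dep T r u + 1 = dep T r v ∨ dep T r v + 1 = dep T r u := by
  have hne : u ≠ v := h.ne
  have h1 : T.dist v r ≤ T.dist v u + T.dist u r := hT.isConnected.dist_triangle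
  have h2 : T.dist u r ≤ T.dist u v + T.dist v r := hT.isConnected.dist_triangle
  have h3 : T.dist v u = 1 := SimpleGraph.dist_eq_one_iff_adj.mpr h.symm
  have h4 : T.dist u v = 1 := SimpleGraph.dist_eq_one_iff_adj.mpr h
  have hneq : T.dist u r ≠ T.dist v r := by
    intro heq
    set n := T.dist u r with hn
    obtain ⟨P, hP, hPl⟩ := hT.isConnected.exists_path_of_dist u r
    by_cases hv : v ∈ P.support
    · have hspec := P.take_spec hv
      have hlen : (P.takeUntil v hv).length + (P.dropUntil v hv).length = n := by
        have := congrArg Walk.length hspec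
        rwa [Walk.length_append, hPl] at this
      have ht1 : T.dist u v ≤ (P.takeUntil v hv).length := SimpleGraph.dist_le _
      have ht2 : T.dist v r ≤ (P.dropUntil v hv).length := SimpleGraph.dist_le _
      omega
    · have hW : (Walk.cons h.symm P).IsPath := (Walk.cons_isPath_iff _ _).mpr ⟨hP, hv⟩
      obtain ⟨Q, hQ, hQl⟩ := hT.isConnected.exists_path_of_dist v r
      have := (hT.existsUnique_path v r).unique hW hQ
      have hl := congrArg Walk.length this
      rw [Walk.length_cons, hPl, hQl] at hl
      omega
  simp only [dep]; omega

lemma parent_eq (hT : T.IsTree) (r : V) {u v : V} (h : T.Adj v u)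
    (hd : dep T r u + 1 = dep T r v) : parent T hT r v = u := by
  have hv : v ≠ r := by
    intro h'; rw [h', dep_root] at hd; omega
  obtain ⟨hadj, hdep⟩ := parent_spec T hT r hv
  obtain ⟨P, hP, hPl⟩ := hT.isConnected.exists_path_of_dist u r
  obtain ⟨P', hP', hP'l⟩ := hT.isConnected.exists_path_of_dist (parent T hT r v) r
  have hWl : (Walk.cons h P).length = T.dist v r := by
    rw [Walk.length_cons, hPl]; simpa [dep] using hd
  have hW'l : (Walk.cons hadj P').length = T.dist v r := by
    rw [Walk.length_cons, hP'l]; simpa [dep] using hdep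
  have hW : (Walk.cons h P).IsPath := Walk.isPath_of_length_eq_dist _ hWl
  have hW' : (Walk.cons hadj P').IsPath := Walk.isPath_of_length_eq_dist _ hW'l
  have heq := (hT.existsUnique_path v r).unique hW' hW
  have := congrArg (fun w => w.getVert 1) heq
  simpa [Walk.getVert_cons_succ, Walk.getVert_zero] using this

lemma edge_rep (hT : T.IsTree) (r : V) {e : Sym2 V} (he : e ∈ T.edgeSet) :
    ∃ v, v ≠ r ∧ e = s(parent T hT r v, v) := by
  induction e with
  | _ u v =>
    rw [SimpleGraph.mem_edgeSet] at he
    rcases adj_dep T hT r he with hd | hd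
    · refine ⟨v, ?_, ?_⟩
      · intro h'; rw [h', dep_root] at hd; omega
      · rw [parent_eq T hT r he.symm hd]
    · refine ⟨u, ?_, ?_⟩
      · intro h'; rw [h', dep_root] at hd; omega
      · rw [parent_eq T hT r he hd, Sym2.eq_swap]

lemma rep_unique (hT : T.IsTree) (r : V) {v v' : V} (hv : v ≠ r) (hv' : v' ≠ r)
    (h : s(parent T hT r v, v) = s(parent T hT r v', v')) : v = v' := by
  have h1 := (parent_spec T hT r hv).2
  have h2 := (parent_spec T hT r hv').2
  rw [Sym2.eq_iff] at h
  rcases h with ⟨_, h⟩ | ⟨h3, h4⟩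
  · exact h
  · rw [h3] at h1
    have h2' := (parent_spec T hT r hv').2
    rw [← h4] at h2'
    omega

noncomputable def nbrEnum (u x : V) : ℕ :=
  if hx : x ∈ T.neighborSet u then
    ((Fintype.equivFinOfCardEq (T.card_neighborSet_eq_degree u)) ⟨x, hx⟩ : ℕ)
  else 0

lemma nbrEnum_lt {u x : V} (h : T.Adj u x) : nbrEnum T u x < T.degree u := by
  rw [nbrEnum, dif_pos (show x ∈ T.neighborSet u from h)]
  exact (Fintype.equivFinOfCardEq (T.card_neighborSet_eq_degree u) ⟨x, h⟩).isLt

lemma nbrEnum_inj {u x y : V} (hx : T.Adj u x) (hy : T.Adj u y)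
    (h : nbrEnum T u x = nbrEnum T u y) : x = y := by
  rw [nbrEnum, dif_pos (show x ∈ T.neighborSet u from hx), nbrEnum,
    dif_pos (show y ∈ T.neighborSet u from hy)] at h
  have := (Fintype.equivFinOfCardEq (T.card_neighborSet_eq_degree u)).injective
    (Fin.val_injective h)
  exact Subtype.ext_iff.mp this

noncomputable def colAux (hT : T.IsTree) (r : V) : ℕ → V → ℕ
  | 0, _ => 0
  | n+1, v =>
    if parent T hT r v = r then nbrEnum T (parent T hT r v) v
    else if nbrEnum T (parent T hT r v) v = colAux hT r n (parent T hT r v) then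
      nbrEnum T (parent T hT r v) (parent T hT r (parent T hT r v))
    else nbrEnum T (parent T hT r v) v

noncomputable def col (hT : T.IsTree) (r v : V) : ℕ := colAux T hT r (dep T r v) v

lemma col_eq (hT : T.IsTree) (r : V) {v : V} (hv : v ≠ r) :
    col T hT r v =
      if parent T hT r v = r then nbrEnum T (parent T hT r v) v
      else if nbrEnum T (parent T hT r v) v = col T hT r (parent T hT r v) then
        nbrEnum T (parent T hT r v) (parent T hT r (parent T hT r v))
      else nbrEnum T (parent T hT r v) v := by
  have hd := (parent_spec T hT r hv).2
  rw [col, ← hd, colAux, col]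

lemma col_lt (hT : T.IsTree) (r : V) {v : V} (hv : v ≠ r) :
    col T hT r v < T.maxDegree := by
  set u := parent T hT r v with hu
  have hadj : T.Adj u v := (parent_spec T hT r hv).1.symm
  rw [col_eq T hT r hv]
  by_cases h1 : u = r
  · rw [if_pos h1]
    exact lt_of_lt_of_le (nbrEnum_lt T hadj) (T.degree_le_maxDegree u)
  · rw [if_neg h1]
    have hadj' : T.Adj u (parent T hT r u) := (parent_spec T hT r h1).1
    by_cases h2 : nbrEnum T u v = col T hT r u
    · rw [if_pos h2]
      exact lt_of_lt_of_le (nbrEnum_lt T hadj') (T.degree_le_maxDegree u)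
    · rw [if_neg h2]
      exact lt_of_lt_of_le (nbrEnum_lt T hadj) (T.degree_le_maxDegree u)

/-- a child's colour differs from its parent's colour (when the parent is not the root). -/
lemma col_ne_parent (hT : T.IsTree) (r : V) {v : V} (hv : v ≠ r)
    (hu : parent T hT r v ≠ r) : col T hT r v ≠ col T hT r (parent T hT r v) := by
  set u := parent T hT r v with hu'
  have hadj : T.Adj u v := (parent_spec T hT r hv).1.symm
  have hadj' : T.Adj u (parent T hT r u) := (parent_spec T hT r hu).1
  have hpune : parent T hT r u ≠ v := by
    intro h
    have d1 := (parent_spec T hT r hv).2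
    rw [← hu'] at d1
    have d2 := (parent_spec T hT r hu).2
    rw [h] at d2
    omega
  rw [col_eq T hT r hv, if_neg hu]
  by_cases h2 : nbrEnum T u v = col T hT r u
  · rw [if_pos h2, ← h2]
    intro hcon
    exact hpune (nbrEnum_inj T hadj' hadj hcon)
  · rw [if_neg h2]
    exact h2

/-- siblings have distinct colours. -/
lemma col_ne_sibling (hT : T.IsTree) (r : V) {v v' : V} (hv : v ≠ r) (hv' : v' ≠ r)
    (hp : parent T hT r v = parent T hT r v') (hne : v ≠ v') :
    col T hT r v ≠ col T hT r v' := by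
  set u := parent T hT r v with hu'
  have hadj : T.Adj u v := (parent_spec T hT r hv).1.symm
  have hadj' : T.Adj u v' := by rw [hp]; exact (parent_spec T hT r hv').1.symm
  rw [col_eq T hT r hv, col_eq T hT r hv', ← hp]
  by_cases h1 : u = r
  · rw [if_pos h1, if_pos h1]
    intro hcon
    exact hne (nbrEnum_inj T hadj hadj' hcon)
  · rw [if_neg h1, if_neg h1]
    have hadjp : T.Adj u (parent T hT r u) := (parent_spec T hT r h1).1
    have hpv : parent T hT r u ≠ v := by
      intro h
      have d1 := (parent_spec T hT r hv).2
      rw [← hu'] at d1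
      have d2 := (parent_spec T hT r h1).2
      rw [h] at d2
      omega
    have hpv' : parent T hT r u ≠ v' := by
      intro h
      have d1 := (parent_spec T hT r hv').2
      rw [← hp] at d1
      have d2 := (parent_spec T hT r h1).2
      rw [h] at d2
      omega
    by_cases h2 : nbrEnum T u v = col T hT r u <;>
      by_cases h3 : nbrEnum T u v' = col T hT r u
    · rw [if_pos h2, if_pos h3]
      intro _
      exact hne (nbrEnum_inj T hadj hadj' (h2.trans h3.symm))
    · rw [if_pos h2, if_neg h3]
      intro hcon
      exact hpv' (nbrEnum_inj T hadjp hadj' hcon)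
    · rw [if_neg h2, if_pos h3]
      intro hcon
      exact hpv (nbrEnum_inj T hadjp hadj hcon.symm)
    · rw [if_neg h2, if_neg h3]
      intro hcon
      exact hne (nbrEnum_inj T hadj hadj' hcon)

open Classical in
noncomputable def wAux (hT : T.IsTree) (r : V) (M : Set (Sym2 V)) : ℕ → V → ℝ
  | 0, _ => 0
  | n+1, v =>
    if s(parent T hT r v, v) ∈ M then 1 - wAux hT r M n (parent T hT r v)
    else -1 - wAux hT r M n (parent T hT r v)

noncomputable def wgt (hT : T.IsTree) (r : V) (M : Set (Sym2 V)) (v : V) : ℝ :=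
  wAux T hT r M (dep T r v) v

open Classical in
lemma wgt_eq (hT : T.IsTree) (r : V) (M : Set (Sym2 V)) {v : V} (hv : v ≠ r) :
    wgt T hT r M v =
      if s(parent T hT r v, v) ∈ M then 1 - wgt T hT r M (parent T hT r v)
      else -1 - wgt T hT r M (parent T hT r v) := by
  have hd := (parent_spec T hT r hv).2
  rw [wgt, ← hd, wAux, wgt]

lemma wgt_add (hT : T.IsTree) (r : V) (M : Set (Sym2 V)) {v : V} (hv : v ≠ r) :
    (0 < wgt T hT r M (parent T hT r v) + wgt T hT r M v ↔ s(parent T hT r v, v) ∈ M) := by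
  rw [wgt_eq T hT r M hv]
  by_cases h : s(parent T hT r v, v) ∈ M
  · rw [if_pos h]; constructor
    · intro _; exact h
    · intro _; ring_nf; norm_num
  · rw [if_neg h]; constructor
    · intro hc; ring_nf at hc; norm_num at hc
    · intro hc; exact absurd hc h

end PMDTreeAux

open PMDTreeAux

/-- If `T` is a tree with at least one edge, then `pmd(T) = Δ(T)`. -/
theorem pmd_tree [Fintype V] [DecidableEq V] (T : SimpleGraph V) [DecidableRel T.Adj]
    (hT : T.IsTree) (he : T.edgeSet.Nonempty) : pmd T = T.maxDegree := by
  classical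
  haveI : Nonempty V := hT.isConnected.nonempty
  set S : Set ℕ := {p : ℕ | ∃ E : Fin p → Set (Sym2 V), IsPMD T E} with hS
  set r : V := Classical.arbitrary V with hr
  -- the decomposition into colour classes
  set E : Fin T.maxDegree → Set (Sym2 V) :=
    fun i => {e | ∃ v, v ≠ r ∧ e = s(parent T hT r v, v) ∧ col T hT r v = (i : ℕ)} with hE
  have hEsub : ∀ i, E i ⊆ T.edgeSet := by
    rintro i e ⟨v, hv, rfl, -⟩
    exact (T.mem_edgeSet).mpr (parent_spec T hT r hv).1.symm
  have hdisj : ∀ i j, i ≠ j → Disjoint (E i) (E j) := by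
    intro i j hij
    rw [Set.disjoint_left]
    rintro e ⟨v, hv, rfl, hcv⟩ ⟨v', hv', heq, hcv'⟩
    have hvv' := rep_unique T hT r hv hv' heq
    apply hij
    apply Fin.ext
    rw [← hcv, hvv', hcv']
  have hunion : (⋃ i, E i) = T.edgeSet := by
    ext e
    constructor
    · rintro ⟨s, ⟨i, rfl⟩, hes⟩
      exact hEsub i hes
    · intro hee
      obtain ⟨v, hv, hrep⟩ := edge_rep T hT r hee
      exact Set.mem_iUnion.mpr ⟨⟨col T hT r v, col_lt T hT r hv⟩, v, hv, hrep, rfl⟩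
  have hmatch : ∀ i : Fin T.maxDegree, ∀ e ∈ E i, ∀ f ∈ E i, e ≠ f →
      ∀ x : V, x ∈ e → x ∉ f := by
    rintro i e ⟨v, hv, rfl, hcv⟩ f ⟨v', hv', rfl, hcv'⟩ hef x hxe hxf
    have hvv' : v ≠ v' := fun h => hef (by rw [h])
    have hcc : col T hT r v = col T hT r v' := by rw [hcv, hcv']
    rw [Sym2.mem_iff] at hxe hxf
    rcases hxe with rfl | rfl <;> rcases hxf with h | h
    · exact col_ne_sibling T hT r hv hv' h hvv' hcc
    · exact col_ne_parent T hT r hv (by rw [h]; exact hv') (by rw [h]; exact hcc)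
    · exact col_ne_parent T hT r hv' (by rw [← h]; exact hv) (by rw [← h]; exact hcc.symm)
    · exact hvv' h
  have hposw : ∀ i : Fin T.maxDegree, ∀ u v : V, T.Adj u v →
      (0 < wgt T hT r (E i) u + wgt T hT r (E i) v ↔ s(u, v) ∈ E i) := by
    intro i u v huv
    rcases adj_dep T hT r huv with hd | hd
    · have hv : v ≠ r := by intro h; rw [h, dep_root] at hd; omega
      have hpv : parent T hT r v = u := parent_eq T hT r huv.symm hd
      have := wgt_add T hT r (E i) hv
      rwa [hpv] at this
    · have hu : u ≠ r := by intro h; rw [h, dep_root] at hd; omega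
      have hpu : parent T hT r u = v := parent_eq T hT r huv hd
      have := wgt_add T hT r (E i) hu
      rw [hpu, add_comm, Sym2.eq_swap] at this
      exact this
  have hPMD : IsPMD T E := by
    refine ⟨hdisj, hunion, fun i => ⟨?_, hmatch i, wgt T hT r (E i), ?_⟩⟩
    · intro e hei
      rw [SimpleGraph.edgeSet_deleteEdges]
      refine ⟨hEsub i hei, ?_⟩
      intro hmem
      obtain ⟨s, ⟨j, rfl⟩, hs⟩ := hmem
      obtain ⟨hji, hes⟩ := Set.mem_iUnion.mp hs
      exact Set.disjoint_left.mp (hdisj j i (ne_of_lt hji)) hes hei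
    · intro u v huv
      exact hposw i u v (SimpleGraph.deleteEdges_adj.mp huv).1
  have hmemS : T.maxDegree ∈ S := ⟨E, hPMD⟩
  -- lower bound
  have hlow : ∀ q ∈ S, T.maxDegree ≤ q := by
    rintro q ⟨F, hdisjF, hunionF, hposF⟩
    rcases Nat.eq_zero_or_pos q with rfl | hq
    · exfalso
      obtain ⟨e0, he0⟩ := he
      rw [← hunionF] at he0
      obtain ⟨s, ⟨j, rfl⟩, -⟩ := he0
      exact j.elim0
    obtain ⟨x, hx⟩ := T.exists_maximal_degree_vertex
    rw [hx, ← T.card_neighborFinset_eq_degree]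
    have : (T.neighborFinset x).card ≤ (Finset.univ : Finset (Fin q)).card := by
      have hex : ∀ y ∈ T.neighborFinset x, ∃ i, s(x, y) ∈ F i := by
        intro y hy
        rw [SimpleGraph.mem_neighborFinset] at hy
        have : s(x, y) ∈ T.edgeSet := (T.mem_edgeSet).mpr hy
        rw [← hunionF] at this
        obtain ⟨s, ⟨j, rfl⟩, hs⟩ := this
        exact ⟨j, hs⟩
      set g : V → Fin q := fun y =>
        if h : ∃ i, s(x, y) ∈ F i then h.choose else ⟨0, hq⟩ with hg
      refine Finset.card_le_card_of_injOn g (fun _ _ => Finset.mem_univ _) ?_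
      intro y hy y' hy' hgy
      by_contra hne
      have hyx : T.Adj x y := (SimpleGraph.mem_neighborFinset _ _ _).mp (by simpa using hy)
      have hy'x : T.Adj x y' := (SimpleGraph.mem_neighborFinset _ _ _).mp (by simpa using hy')
      have h1 : ∃ i, s(x, y) ∈ F i := hex y (by simpa using hy)
      have h2 : ∃ i, s(x, y') ∈ F i := hex y' (by simpa using hy')
      have hgy1 : s(x, y) ∈ F (g y) := by rw [hg]; simp only [dif_pos h1]; exact h1.choose_spec
      have hgy2 : s(x, y') ∈ F (g y') := by rw [hg]; simp only [dif_pos h2]; exact h2.choose_spec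
      rw [hgy] at hgy1
      have hefne : s(x, y) ≠ s(x, y') := by
        intro hcon
        rw [Sym2.eq_iff] at hcon
        rcases hcon with ⟨-, h⟩ | ⟨h, -⟩
        · exact hne h
        · exact hy'x.ne h
      exact (hposF (g y')).2.1 _ hgy1 _ hgy2 hefne x (Sym2.mem_mk_left x y)
        (Sym2.mem_mk_left x y')
    simpa using this
  have hSne : S.Nonempty := ⟨_, hmemS⟩
  have : pmd T = sInf S := rfl
  rw [this]
  exact le_antisymm (Nat.sInf_le hmemS) (hlow _ (Nat.sInf_mem hSne))
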